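/- Quantitative form of stochastic monotonicity: with p_i, V_i, v_{ji}, p'_j, V'_j as in the stochastic post-processing setting, one has the identity S_{C'} - S_C = D_KL(P₂‖Q₂), where (P₂)_{ij} = v_{ji} p_i and (Q₂)_{ij} = (v_{ji} V_i / V'_j) p'_j, and moreover D_KL(P₂‖Q₂) ≥ D_KL(p‖q) where q_i = ∑_j (v_{ji} V_i / V'_j) p'_j is the marginal of Q₂. Here S_C = -∑_i p_i ln(p_i/V_i) and S_{C'} = -∑_j p'_j ln(p'_j/V'_j). -/

import Mathlib

open BigOperators

/-- Pointwise key inequality for the log-sum inequality. -/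
lemma key_logsum (a b A B : ℝ) (hb : 0 ≤ b) (hab : a ≠ 0 → 0 < a ∧ 0 < b)
    (hA : 0 < A) (hB : 0 < B) :
    a * Real.log (A / B) + (a - b * A / B) ≤ a * Real.log (a / b) := by
  rcases eq_or_ne a 0 with ha | ha
  · subst ha
    simp only [zero_mul, zero_sub, zero_add]
    have : 0 ≤ b * A / B := by positivity
    linarith
  · obtain ⟨ha', hb'⟩ := hab ha
    set x : ℝ := (a / b) / (A / B) with hx
    have hxpos : 0 < x := by positivity
    have hlog1 : Real.log x⁻¹ ≤ x⁻¹ - 1 :=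
      Real.log_le_sub_one_of_pos (by positivity)
    rw [Real.log_inv] at hlog1
    have hlog : 1 - x⁻¹ ≤ Real.log x := by linarith
    have hxlog : Real.log x = Real.log (a / b) - Real.log (A / B) :=
      Real.log_div (by positivity) (by positivity)
    have h1 : a * (1 - x⁻¹) ≤ a * Real.log x := by
      exact mul_le_mul_of_nonneg_left hlog (le_of_lt ha')
    have h2 : a * (1 - x⁻¹) = a - b * A / B := by
      rw [hx]
      field_simp
    rw [hxlog] at h1
    rw [h2] at h1
    nlinarith [h1]

/-- Pointwise identity for the KL term. -/
lemma key_ident (vv pp VV V'' p'' : ℝ) (hvv : 0 ≤ vv) (hpp : 0 ≤ pp)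
    (hVV : 0 < VV) (hV'' : 0 < V'') (hp'' : vv * pp ≠ 0 → 0 < p'') :
    (vv * pp) * Real.log ((vv * pp) / ((vv * VV / V'') * p''))
      = (vv * pp) * (Real.log (pp / VV) - Real.log (p'' / V'')) := by
  rcases eq_or_ne (vv * pp) 0 with h | h
  · rw [h]; ring
  · have hv' : 0 < vv := lt_of_le_of_ne hvv (fun e => h (by rw [← e]; ring))
    have hp' : 0 < pp := lt_of_le_of_ne hpp (fun e => h (by rw [← e]; ring))
    have hpos := hp'' h
    have harg : (vv * pp) / ((vv * VV / V'') * p'') = (pp / VV) / (p'' / V'') := by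
      field_simp
    rw [harg, Real.log_div (by positivity) (by positivity)]

theorem obs_entropy_stochastic_monotone_quantitative {ι κ : Type*} [Fintype ι] [Fintype κ]
    (p V : ι → ℝ) (v : κ → ι → ℝ)
    (hp : ∀ i, 0 ≤ p i) (hpsum : ∑ i, p i = 1)
    (hV : ∀ i, 0 < V i)
    (hv : ∀ j i, 0 ≤ v j i) (hvsum : ∀ i, ∑ j, v j i = 1)
    (p' V' : κ → ℝ)
    (hp' : ∀ j, p' j = ∑ i, v j i * p i)
    (hV' : ∀ j, V' j = ∑ i, v j i * V i)
    (hV'pos : ∀ j, 0 < V' j) :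
    ((-∑ j, p' j * Real.log (p' j / V' j)) - (-∑ i, p i * Real.log (p i / V i))
        = ∑ i, ∑ j, (v j i * p i) * Real.log ((v j i * p i) / ((v j i * V i / V' j) * p' j)))
    ∧ (∑ i, p i * Real.log (p i / (∑ j, (v j i * V i / V' j) * p' j))
        ≤ ∑ i, ∑ j, (v j i * p i) * Real.log ((v j i * p i) / ((v j i * V i / V' j) * p' j))) := by
  -- positivity of p' j whenever some v j i * p i > 0
  have hp'pos : ∀ j i, v j i * p i ≠ 0 → 0 < p' j := by
    intro j i h
    have hle : v j i * p i ≤ p' j := by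
      rw [hp' j]
      exact Finset.single_le_sum (fun i' _ => mul_nonneg (hv j i') (hp i'))
        (Finset.mem_univ i)
    have : 0 < v j i * p i :=
      lt_of_le_of_ne (mul_nonneg (hv j i) (hp i)) (Ne.symm h)
    linarith
  have hident : ∀ i j, (v j i * p i) * Real.log ((v j i * p i) / ((v j i * V i / V' j) * p' j))
      = (v j i * p i) * (Real.log (p i / V i) - Real.log (p' j / V' j)) := by
    intro i j
    exact key_ident _ _ _ _ _ (hv j i) (hp i) (hV i) (hV'pos j) (hp'pos j i)
  constructor
  · -- identity
    calc (-∑ j, p' j * Real.log (p' j / V' j)) - (-∑ i, p i * Real.log (p i / V i))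
        = (∑ i, p i * Real.log (p i / V i)) - ∑ j, p' j * Real.log (p' j / V' j) := by ring
      _ = (∑ i, ∑ j, (v j i * p i) * Real.log (p i / V i))
          - ∑ j, ∑ i, (v j i * p i) * Real.log (p' j / V' j) := by
          congr 1
          · apply Finset.sum_congr rfl
            intro i _
            rw [← Finset.sum_mul, ← Finset.sum_mul, hvsum i, one_mul]
          · apply Finset.sum_congr rfl
            intro j _
            rw [← Finset.sum_mul, ← hp' j]
      _ = ∑ i, ∑ j, (v j i * p i) * (Real.log (p i / V i) - Real.log (p' j / V' j)) := by
          rw [Finset.sum_comm (s := Finset.univ) (t := Finset.univ)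
            (f := fun j i => (v j i * p i) * Real.log (p' j / V' j))]
          rw [← Finset.sum_sub_distrib]
          apply Finset.sum_congr rfl
          intro i _
          rw [← Finset.sum_sub_distrib]
          apply Finset.sum_congr rfl
          intro j _
          ring
      _ = ∑ i, ∑ j, (v j i * p i) * Real.log ((v j i * p i) / ((v j i * V i / V' j) * p' j)) := by
          apply Finset.sum_congr rfl
          intro i _
          apply Finset.sum_congr rfl
          intro j _
          exact (hident i j).symm
  · -- log-sum (data processing) inequality, term by term in i
    apply Finset.sum_le_sum
    intro i _
    set q : ℝ := ∑ j, (v j i * V i / V' j) * p' j with hq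
    rcases eq_or_lt_of_le (hp i) with hpi0 | hpi
    · -- p i = 0
      have : ∀ j ∈ Finset.univ,
          (v j i * p i) * Real.log ((v j i * p i) / ((v j i * V i / V' j) * p' j)) = 0 := by
        intro j _
        rw [← hpi0]
        ring
      rw [Finset.sum_congr rfl this, Finset.sum_const_zero, ← hpi0]
      simp
    · -- p i > 0
      have hbnn : ∀ j, 0 ≤ (v j i * V i / V' j) * p' j := by
        intro j
        rcases eq_or_ne (v j i * p i) 0 with h | h
        · rcases mul_eq_zero.mp h with h' | h'
          · rw [h']; simp
          · exact absurd h' (ne_of_gt hpi)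
        · have h1 := hp'pos j i h
          have h2 : 0 < v j i :=
            lt_of_le_of_ne (hv j i) (fun e => h (by rw [← e]; ring))
          have h3 := hV i
          have h4 := hV'pos j
          positivity
      have hqpos : 0 < q := by
        -- some v j i > 0
        have : ∃ j, 0 < v j i := by
          by_contra hcon
          push_neg at hcon
          have : ∑ j, v j i = 0 := Finset.sum_eq_zero (fun j _ =>
            le_antisymm (hcon j) (hv j i))
          rw [hvsum i] at this
          norm_num at this
        obtain ⟨j₀, hj₀⟩ := this
        have hne : v j₀ i * p i ≠ 0 := by positivity
        have hp'j := hp'pos j₀ i hne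
        have hterm : 0 < (v j₀ i * V i / V' j₀) * p' j₀ := by
          have := hV'pos j₀; have := hV i; positivity
        calc (0:ℝ) < (v j₀ i * V i / V' j₀) * p' j₀ := hterm
          _ ≤ q := Finset.single_le_sum (fun j _ => hbnn j) (Finset.mem_univ j₀)
      -- apply key_logsum with A = p i, B = q
      have hkey : ∀ j ∈ Finset.univ,
          (v j i * p i) * Real.log (p i / q) + ((v j i * p i) - ((v j i * V i / V' j) * p' j) * (p i) / q)
            ≤ (v j i * p i) * Real.log ((v j i * p i) / ((v j i * V i / V' j) * p' j)) := by
        intro j _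
        apply key_logsum _ _ _ _ (hbnn j) _ hpi hqpos
        intro h
        have hv' : 0 < v j i := lt_of_le_of_ne (hv j i) (fun e => h (by rw [← e]; ring))
        have hp'j := hp'pos j i h
        constructor
        · positivity
        · have := hV'pos j; have := hV i; positivity
      have hsum := Finset.sum_le_sum hkey
      rw [Finset.sum_add_distrib] at hsum
      have e1 : ∑ j, (v j i * p i) * Real.log (p i / q)
          = p i * Real.log (p i / q) := by
        rw [← Finset.sum_mul, ← Finset.sum_mul, hvsum i, one_mul]
      have e2 : ∑ j, ((v j i * p i) - ((v j i * V i / V' j) * p' j) * (p i) / q) = 0 := by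
        rw [Finset.sum_sub_distrib, ← Finset.sum_mul, hvsum i, one_mul]
        have : ∑ j, ((v j i * V i / V' j) * p' j) * p i / q
            = (∑ j, (v j i * V i / V' j) * p' j) * p i / q := by
          rw [← Finset.sum_div, ← Finset.sum_mul]
        rw [this, ← hq]
        field_simp
        ring
      rw [e1, e2, add_zero] at hsum
      exact hsum
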